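/- arXiv:1911.04321 — 2 statements merged into one kernel-verified Lean document; each statement's English description precedes it below -/
import Mathlib

section
/- Let (X,τ,d) be an extended metric-topological space with (X,τ) compact, let a < b be real numbers, and let Γ be a set of τ-continuous curves γ : [a,b] → X for which there exists a concave, nondecreasing, continuous function ω : [0,∞) → [0,∞) with ω(0) = 0 such that d(γ(r),γ(s)) ≤ ω(|r−s|) for all r, s ∈ [a,b] and all γ ∈ Γ. Then Γ is relatively compact in the space C([a,b];X) of τ-continuous curves endowed with the compact-open topology. -/
open Filter Set Topology
open scoped ENNReal

/-- The Lipschitz constant of `f` on the set `U` with respect to the extended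
(semi)distance `d`. -/
noncomputable def eLip {X : Type*} (d : X → X → ℝ≥0∞) (f : X → ℝ) (U : Set X) : ℝ≥0∞ :=
  sInf {L : ℝ≥0∞ | ∀ y ∈ U, ∀ z ∈ U, ENNReal.ofReal |f y - f z| ≤ L * d y z}

/-- The family of bounded continuous `d`-Lipschitz real functions on `X`. -/
def LipB (X : Type*) [TopologicalSpace X] (d : X → X → ℝ≥0∞) : Set (X → ℝ) :=
  {f | Continuous f ∧ (∃ C : ℝ, ∀ x, |f x| ≤ C) ∧ eLip d f Set.univ ≠ ⊤}

/-- `(X, τ, d)` is an extended metric-topological space: `τ` is Hausdorff, `d` is an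
extended distance, lower semicontinuous w.r.t. the product topology, the bounded
continuous `d`-Lipschitz functions generate the topology, and `d` is recovered as the
supremum of differences of `1`-Lipschitz bounded continuous functions. -/
def IsEMT (X : Type*) [tX : TopologicalSpace X] (d : X → X → ℝ≥0∞) : Prop :=
  T2Space X ∧
  (∀ x, d x x = 0) ∧
  (∀ x y, d x y = d y x) ∧
  (∀ x y z, d x z ≤ d x y + d y z) ∧
  (∀ x y, d x y = 0 → x = y) ∧
  LowerSemicontinuous (fun p : X × X => d p.1 p.2) ∧
  (tX = ⨅ f ∈ LipB X d, TopologicalSpace.induced f inferInstance) ∧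
  (∀ x y, d x y =
    ⨆ f ∈ {g ∈ LipB X d | eLip d g Set.univ ≤ 1}, ENNReal.ofReal |f x - f y|)

open scoped Uniformity UniformConvergence

theorem stmt8 {X : Type*} [TopologicalSpace X] [CompactSpace X]
    (d : X → X → ℝ≥0∞) (hX : IsEMT X d)
    (a b : ℝ) (hab : a < b)
    (Γ : Set C(Set.Icc a b, X))
    (ω : ℝ → ℝ)
    (hω0 : ω 0 = 0)
    (hωnn : ∀ r ∈ Set.Ici (0 : ℝ), 0 ≤ ω r)
    (hωcont : ContinuousOn ω (Set.Ici 0))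
    (hωmono : MonotoneOn ω (Set.Ici 0))
    (hωconc : ConcaveOn ℝ (Set.Ici 0) ω)
    (hequi : ∀ γ ∈ Γ, ∀ r s : Set.Icc a b,
      d (γ r) (γ s) ≤ ENNReal.ofReal (ω |(r : ℝ) - (s : ℝ)|)) :
    IsCompact (closure Γ) := by
  obtain ⟨ht2, hd0, hdsymm, hdtri, hdeq, hdlsc, -, -⟩ := hX
  haveI : T2Space X := ht2
  -- key: every neighborhood of the diagonal contains a `d`-ball of the diagonal
  have key : ∀ V ∈ 𝓝ˢ (Set.diagonal X), ∃ ε : ℝ≥0∞, 0 < ε ∧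
      ∀ p : X × X, d p.1 p.2 ≤ ε → p ∈ V := by
    intro V hV
    obtain ⟨U, hUopen, hdiag, hUV⟩ := mem_nhdsSet_iff_exists.mp hV
    set S : ℕ → Set (X × X) := fun n => Uᶜ ∩ {p | d p.1 p.2 ≤ ((n : ℝ≥0∞) + 1)⁻¹} with hS
    by_cases h : ∀ n, (S n).Nonempty
    · exfalso
      have hclosed : ∀ n, IsClosed (S n) := by
        intro n
        refine hUopen.isClosed_compl.inter ?_
        have : {p : X × X | d p.1 p.2 ≤ ((n : ℝ≥0∞) + 1)⁻¹} =
            ((fun p : X × X => d p.1 p.2) ⁻¹' Set.Ioi (((n : ℝ≥0∞) + 1)⁻¹))ᶜ := by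
          ext p; simp [not_lt]
        rw [this]
        exact (hdlsc.isOpen_preimage _).isClosed_compl
      have hmono : ∀ n, S (n + 1) ⊆ S n := by
        intro n p hp
        have hle : ((n : ℝ≥0∞) + 1)⁻¹ ≥ (((n + 1 : ℕ) : ℝ≥0∞) + 1)⁻¹ :=
          ENNReal.inv_le_inv' (by push_cast; exact le_add_right le_rfl)
        exact ⟨hp.1, le_trans hp.2 hle⟩
      obtain ⟨p, hp⟩ := IsCompact.nonempty_iInter_of_sequence_nonempty_isCompact_isClosed
        S hmono h ((hclosed 0).isCompact) hclosed
      simp only [Set.mem_iInter] at hp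
      have hd : d p.1 p.2 = 0 := by
        by_contra hne
        obtain ⟨n, hn⟩ := ENNReal.exists_inv_nat_lt hne
        have h1 : d p.1 p.2 ≤ ((n : ℝ≥0∞) + 1)⁻¹ := (hp n).2
        have h2 : ((n : ℝ≥0∞) + 1)⁻¹ ≤ (n : ℝ≥0∞)⁻¹ :=
          ENNReal.inv_le_inv' (le_add_right le_rfl)
        exact lt_irrefl _ (lt_of_le_of_lt (h1.trans h2) hn)
      have : p.1 = p.2 := hdeq _ _ hd
      exact (hp 0).1 (hdiag (by simpa [Set.mem_diagonal_iff] using this))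
    · push_neg at h
      obtain ⟨n, hn⟩ := h
      refine ⟨((n : ℝ≥0∞) + 1)⁻¹, ?_, ?_⟩
      · exact ENNReal.inv_pos.mpr
          (ENNReal.add_ne_top.mpr ⟨ENNReal.natCast_ne_top n, ENNReal.one_ne_top⟩)
      · intro p hdp
        by_contra hpV
        have hpU : p ∈ Uᶜ := fun hU => hpV (hUV hU)
        exact Set.eq_empty_iff_forall_notMem.mp hn p ⟨hpU, hdp⟩
  letI uX : UniformSpace X := uniformSpaceOfCompactR1
  have huX : 𝓤 X = 𝓝ˢ (Set.diagonal X) := rfl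
  -- equicontinuity of Γ
  have heqc : Equicontinuous (fun γ : Γ => ⇑(γ : C(Set.Icc a b, X))) := by
    intro t V hV
    rw [huX] at hV
    obtain ⟨ε, hε, hεV⟩ := key V hV
    have htend : Filter.Tendsto (fun r => ENNReal.ofReal (ω r)) (𝓝[Set.Ici 0] 0) (𝓝 0) := by
      have h0 : ContinuousWithinAt ω (Set.Ici 0) 0 := hωcont 0 Set.self_mem_Ici
      have := (ENNReal.continuous_ofReal.tendsto (ω 0)).comp h0
      rwa [hω0, ENNReal.ofReal_zero] at this
    have hev : (fun r => ENNReal.ofReal (ω r)) ⁻¹' Set.Iio ε ∈ 𝓝[Set.Ici 0] (0 : ℝ) :=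
      htend (isOpen_Iio.mem_nhds hε)
    obtain ⟨δ, hδ, hδsub⟩ := mem_nhdsGE_iff_exists_Ico_subset.mp hev
    have hN : {s : Set.Icc a b | |(s : ℝ) - (t : ℝ)| < δ} ∈ 𝓝 t := by
      have hc : Continuous fun s : Set.Icc a b => |(s : ℝ) - (t : ℝ)| :=
        (continuous_subtype_val.sub continuous_const).abs
      exact (isOpen_Iio.preimage hc).mem_nhds (by simpa using hδ)
    filter_upwards [hN] with s hs γ
    apply hεV
    have h1 := hequi γ γ.2 t s
    have h2 : ENNReal.ofReal (ω |(t : ℝ) - (s : ℝ)|) < ε := by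
      apply hδsub
      constructor
      · exact abs_nonneg _
      · rw [abs_sub_comm]; exact hs
    exact (h1.trans h2.le)
  -- apply Arzelà–Ascoli
  haveI : T2Space (Set.Icc a b →ᵤ[{K : Set (Set.Icc a b) | IsCompact K}] X) :=
    UniformOnFun.t2Space_of_covering
      (Set.eq_univ_iff_forall.mpr fun x => ⟨{x}, isCompact_singleton, rfl⟩)
  refine ArzelaAscoli.isCompact_closure_of_isClosedEmbedding
    (fun K hK => hK)
    (ContinuousMap.isUniformEmbedding_toUniformOnFunIsCompact.isClosedEmbedding)
    (fun K _ => (heqc.equicontinuousOn K))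
    (fun K _ x _ => ⟨Set.univ, isCompact_univ, fun _ _ => Set.mem_univ _⟩)
end

section
/- Let (X,τ,d) be an extended metric-topological space, let a < b, and let γ : [a,b] → X be a τ-continuous curve with finite d-variation, Var_d(γ;[a,b]) < ∞. Then the variation function V_γ(t) := Var_d(γ;[a,t]) is continuous on [a,b], and γ is d-continuous: for every t ∈ [a,b], d(γ(s),γ(t)) → 0 as s → t. -/
open Filter Set Topology
open scoped ENNReal

/-- The `d`-variation of the curve `γ` on the set `J ⊆ ℝ`: the supremum of
`∑ d(γ t_{j}, γ t_{j+1})` over all finite increasing sequences of points of `J`. -/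
noncomputable def eVar {X : Type*} (d : X → X → ℝ≥0∞) (γ : ℝ → X) (J : Set ℝ) : ℝ≥0∞ :=
  ⨆ (N : ℕ) (t : Fin (N + 1) → ℝ) (_ : ∀ j, t j ∈ J) (_ : StrictMono t),
    ∑ j : Fin N, d (γ (t j.castSucc)) (γ (t j.succ))


section aux
variable {X : Type*} [TopologicalSpace X] (d : X → X → ℝ≥0∞) (γ : ℝ → X)


lemma partition_sum_le {J : Set ℝ} {N : ℕ} (t : Fin (N+1) → ℝ)
    (h1 : ∀ j, t j ∈ J) (h2 : StrictMono t) :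
    ∑ j : Fin N, d (γ (t j.castSucc)) (γ (t j.succ)) ≤ eVar d γ J := by
  unfold eVar
  exact le_iSup_of_le N (le_iSup_of_le t (le_iSup_of_le h1 (le_iSup_of_le h2 le_rfl)))

lemma eVar_le {J : Set ℝ} {c : ℝ≥0∞}
    (h : ∀ (N : ℕ) (t : Fin (N+1) → ℝ), (∀ j, t j ∈ J) → StrictMono t →
      ∑ j : Fin N, d (γ (t j.castSucc)) (γ (t j.succ)) ≤ c) : eVar d γ J ≤ c :=
  iSup_le fun N => iSup_le fun t => iSup_le fun h1 => iSup_le fun h2 => h N t h1 h2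

lemma eVar_mono {J J' : Set ℝ} (h : J ⊆ J') : eVar d γ J ≤ eVar d γ J' :=
  eVar_le _ _ fun _ t h1 h2 => partition_sum_le _ _ t (fun j => h (h1 j)) h2

lemma exists_partition_of_lt {J : Set ℝ} {c : ℝ≥0∞} (h : c < eVar d γ J) :
    ∃ (N : ℕ) (t : Fin (N+1) → ℝ), (∀ j, t j ∈ J) ∧ StrictMono t ∧
      c < ∑ j : Fin N, d (γ (t j.castSucc)) (γ (t j.succ)) := by
  by_contra hcon
  push_neg at hcon
  exact absurd (eVar_le d γ fun N t h1 h2 => hcon N t h1 h2) (not_le.mpr h)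

lemma snoc_strictMono {M : ℕ} {t : Fin (M+1) → ℝ} (ht : StrictMono t) {x : ℝ}
    (hx : t (Fin.last M) < x) : StrictMono (Fin.snoc t x : Fin (M+2) → ℝ) := by
  intro i j hij
  rcases Fin.eq_castSucc_or_eq_last j with ⟨j', rfl⟩ | rfl
  · rcases Fin.eq_castSucc_or_eq_last i with ⟨i', rfl⟩ | rfl
    · simp only [Fin.snoc_castSucc]
      exact ht (by exact_mod_cast hij)
    · exact absurd hij (asymm (Fin.castSucc_lt_last j'))
  · rcases Fin.eq_castSucc_or_eq_last i with ⟨i', rfl⟩ | rfl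
    · simp only [Fin.snoc_castSucc, Fin.snoc_last]
      exact lt_of_le_of_lt (ht.monotone (Fin.le_last i')) hx
    · exact absurd hij (lt_irrefl _)

lemma snoc_sum {M : ℕ} (t : Fin (M+1) → ℝ) (x : ℝ) :
    ∑ j : Fin (M+1), d (γ ((Fin.snoc t x : Fin (M+2) → ℝ) j.castSucc))
      (γ ((Fin.snoc t x : Fin (M+2) → ℝ) j.succ))
    = (∑ j : Fin M, d (γ (t j.castSucc)) (γ (t j.succ))) + d (γ (t (Fin.last M))) (γ x) := by
  rw [Fin.sum_univ_castSucc]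
  congr 1
  · refine Finset.sum_congr rfl fun j _ => ?_
    rw [Fin.succ_castSucc]
    simp only [Fin.snoc_castSucc]
  · simp only [Fin.succ_last, Fin.snoc_castSucc, Fin.snoc_last]

lemma cons_strictMono {M : ℕ} {w : Fin (M+1) → ℝ} (hw : StrictMono w) {x : ℝ}
    (hx : x < w 0) : StrictMono (Fin.cons x w : Fin (M+2) → ℝ) := by
  intro i j hij
  rcases Fin.eq_zero_or_eq_succ j with rfl | ⟨j', rfl⟩
  · exact absurd hij (Fin.not_lt_zero i)
  · rcases Fin.eq_zero_or_eq_succ i with rfl | ⟨i', rfl⟩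
    · simp only [Fin.cons_zero, Fin.cons_succ]
      exact lt_of_lt_of_le hx (hw.monotone (Fin.zero_le _))
    · simp only [Fin.cons_succ]
      exact hw (Fin.succ_lt_succ_iff.mp hij)

lemma cons_sum {M : ℕ} (w : Fin (M+1) → ℝ) (x : ℝ) :
    ∑ j : Fin (M+1), d (γ ((Fin.cons x w : Fin (M+2) → ℝ) j.castSucc))
      (γ ((Fin.cons x w : Fin (M+2) → ℝ) j.succ))
    = d (γ x) (γ (w 0)) + ∑ j : Fin M, d (γ (w j.castSucc)) (γ (w j.succ)) := by
  rw [Fin.sum_univ_succ]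
  have h0 : d (γ ((Fin.cons x w : Fin (M+2) → ℝ) (0 : Fin (M+1)).castSucc))
      (γ ((Fin.cons x w : Fin (M+2) → ℝ) (0 : Fin (M+1)).succ)) = d (γ x) (γ (w 0)) := by
    simp
  rw [h0]
  congr 1


/-- extension of a finite partition to a monotone sequence on `ℕ`. -/
def extSeq {M : ℕ} (u : Fin (M+1) → ℝ) : ℕ → ℝ :=
  fun n => u ⟨min n M, Nat.lt_succ_of_le (min_le_right _ _)⟩

lemma extSeq_monotone {M : ℕ} {u : Fin (M+1) → ℝ} (hu : Monotone u) :
    Monotone (extSeq u) := by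
  intro m n h
  exact hu (by simp only [Fin.mk_le_mk]; omega)

lemma extSeq_mem {M : ℕ} {u : Fin (M+1) → ℝ} {J : Set ℝ} (h1 : ∀ j, u j ∈ J) (n : ℕ) :
    extSeq u n ∈ J := h1 _

lemma fin_sum_extSeq {M : ℕ} (u : Fin (M+1) → ℝ) (g : ℝ → ℝ) :
    ∑ j : Fin M, d (γ (g (u j.castSucc))) (γ (g (u j.succ))) =
    ∑ j ∈ Finset.range M, d (γ (g (extSeq u j))) (γ (g (extSeq u (j+1)))) := by
  rw [← Fin.sum_univ_eq_sum_range]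
  refine Finset.sum_congr rfl fun j _ => ?_
  have hj := j.isLt
  have e1 : extSeq u (j : ℕ) = u j.castSucc := by
    unfold extSeq; congr 1
    exact Fin.ext (by simp only [Fin.coe_castSucc]; omega)
  have e2 : extSeq u ((j : ℕ)+1) = u j.succ := by
    unfold extSeq; congr 1
    exact Fin.ext (by simp only [Fin.val_succ]; omega)
  rw [e1, e2]

lemma fin_sum_extSeq' {M : ℕ} (u : Fin (M+1) → ℝ) :
    ∑ j : Fin M, d (γ (u j.castSucc)) (γ (u j.succ)) =
    ∑ j ∈ Finset.range M, d (γ (extSeq u j)) (γ (extSeq u (j+1))) := by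
  simpa using fin_sum_extSeq d γ u id

/-- monotone (not nec. strict) ℕ-sequences give lower bounds for eVar. -/
lemma mono_sum_le {J : Set ℝ} (hd0 : ∀ x, d x x = 0) (u : ℕ → ℝ) (hu : Monotone u)
    (hmem : ∀ n, u n ∈ J) (N : ℕ) :
    ∑ j ∈ Finset.range N, d (γ (u j)) (γ (u (j+1))) ≤ eVar d γ J := by
  suffices h : ∃ (M : ℕ) (t : Fin (M+1) → ℝ), (∀ j, t j ∈ J) ∧ StrictMono t ∧
      t (Fin.last M) = u N ∧
      (∑ j : Fin M, d (γ (t j.castSucc)) (γ (t j.succ)))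
        = ∑ j ∈ Finset.range N, d (γ (u j)) (γ (u (j+1))) by
    obtain ⟨M, t, h1, h2, _, h4⟩ := h
    rw [← h4]; exact partition_sum_le d γ t h1 h2
  induction N with
  | zero =>
    refine ⟨0, fun _ => u 0, fun _ => hmem 0, ?_, rfl, by simp⟩
    intro i j hij
    haveI : Subsingleton (Fin (0+1)) := Fin.subsingleton_one
    exact absurd (Subsingleton.elim i j) (ne_of_lt hij)
  | succ n ih =>
    obtain ⟨M, t, h1, h2, h3, h4⟩ := ih
    rcases eq_or_lt_of_le (hu (Nat.le_succ n)) with he | hlt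
    · refine ⟨M, t, h1, h2, h3.trans he, ?_⟩
      rw [Finset.sum_range_succ, ← he, hd0, add_zero, h4]
    · refine ⟨M+1, Fin.snoc t (u (n+1)), ?_, snoc_strictMono h2 (by rw [h3]; exact hlt), ?_, ?_⟩
      · intro j
        rcases Fin.eq_castSucc_or_eq_last j with ⟨j', rfl⟩ | rfl
        · simp only [Fin.snoc_castSucc]; exact h1 _
        · simp only [Fin.snoc_last]; exact hmem _
      · simp only [Fin.snoc_last]
      · rw [snoc_sum, h3, h4, Finset.sum_range_succ]

lemma eVar_superadd (hd0 : ∀ x, d x x = 0) {c s t : ℝ} (hcs : c ≤ s) (hst : s ≤ t) :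
    eVar d γ (Set.Icc c s) + eVar d γ (Set.Icc s t) ≤ eVar d γ (Set.Icc c t) := by
  rcases eq_or_ne (eVar d γ (Set.Icc c t)) ⊤ with h | hT
  · rw [h]; exact le_top
  have key : ∀ (M : ℕ) (u : Fin (M+1) → ℝ), (∀ j, u j ∈ Set.Icc c s) → StrictMono u →
      ∀ (N : ℕ) (v : Fin (N+1) → ℝ), (∀ j, v j ∈ Set.Icc s t) → StrictMono v →
      (∑ j : Fin M, d (γ (u j.castSucc)) (γ (u j.succ))) +
      (∑ j : Fin N, d (γ (v j.castSucc)) (γ (v j.succ))) ≤ eVar d γ (Set.Icc c t) := by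
    intro M u hu1 hu2 N v hv1 hv2
    set w : ℕ → ℝ := fun n => if n ≤ M then extSeq u n else extSeq v (n - (M+1)) with hw
    have hwmem : ∀ n, w n ∈ Set.Icc c t := by
      intro n
      by_cases h : n ≤ M
      · simp only [hw, if_pos h]
        exact ⟨(extSeq_mem hu1 n).1, (extSeq_mem hu1 n).2.trans hst⟩
      · simp only [hw, if_neg h]
        exact ⟨hcs.trans (extSeq_mem hv1 _).1, (extSeq_mem hv1 _).2⟩
    have hwmono : Monotone w := by
      intro m n hmn
      by_cases hm : m ≤ M <;> by_cases hn : n ≤ M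
      · simpa only [hw, if_pos hm, if_pos hn] using extSeq_monotone hu2.monotone hmn
      · simp only [hw, if_pos hm, if_neg hn]
        exact le_trans (extSeq_mem hu1 m).2 (extSeq_mem hv1 _).1
      · omega
      · simp only [hw, if_neg hm, if_neg hn]
        exact extSeq_monotone hv2.monotone (by omega)
    have hbig := mono_sum_le d γ hd0 w hwmono hwmem ((M+1)+N)
    refine le_trans ?_ hbig
    rw [Finset.sum_range_add, Finset.sum_range_succ]
    have hU : ∑ j ∈ Finset.range M, d (γ (w j)) (γ (w (j+1)))
        = ∑ j : Fin M, d (γ (u j.castSucc)) (γ (u j.succ)) := by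
      rw [fin_sum_extSeq' d γ u]
      refine Finset.sum_congr rfl fun j hj => ?_
      simp only [Finset.mem_range] at hj
      simp only [hw, if_pos (by omega : j ≤ M), if_pos (by omega : j+1 ≤ M)]
    have hV : ∑ j ∈ Finset.range N, d (γ (w (M+1+j))) (γ (w (M+1+j+1)))
        = ∑ j : Fin N, d (γ (v j.castSucc)) (γ (v j.succ)) := by
      rw [fin_sum_extSeq' d γ v]
      refine Finset.sum_congr rfl fun j hj => ?_
      simp only [hw, if_neg (by omega : ¬ M+1+j ≤ M), if_neg (by omega : ¬ M+1+j+1 ≤ M)]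
      congr 3 <;> omega
    rw [hU, hV]
    calc (∑ j : Fin M, d (γ (u j.castSucc)) (γ (u j.succ))) +
          ∑ j : Fin N, d (γ (v j.castSucc)) (γ (v j.succ))
        ≤ ((∑ j : Fin M, d (γ (u j.castSucc)) (γ (u j.succ))) + d (γ (w M)) (γ (w (M+1)))) +
          ∑ j : Fin N, d (γ (v j.castSucc)) (γ (v j.succ)) := by
          exact add_le_add_left (le_add_right le_rfl) _
      _ = _ := by ring
  -- now conclude
  have hsub1 : eVar d γ (Set.Icc c s) ≤ eVar d γ (Set.Icc c t) :=
    eVar_mono d γ (Set.Icc_subset_Icc le_rfl hst)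
  have step1 : ∀ (N : ℕ) (v : Fin (N+1) → ℝ), (∀ j, v j ∈ Set.Icc s t) → StrictMono v →
      eVar d γ (Set.Icc c s) + (∑ j : Fin N, d (γ (v j.castSucc)) (γ (v j.succ)))
        ≤ eVar d γ (Set.Icc c t) := by
    intro N v hv1 hv2
    have hSv : (∑ j : Fin N, d (γ (v j.castSucc)) (γ (v j.succ))) ≤ eVar d γ (Set.Icc c t) :=
      partition_sum_le d γ v (fun j => ⟨hcs.trans (hv1 j).1, (hv1 j).2⟩) hv2
    have hSvne : (∑ j : Fin N, d (γ (v j.castSucc)) (γ (v j.succ))) ≠ ⊤ :=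
      (hSv.trans_lt (lt_top_iff_ne_top.mpr hT)).ne
    rw [← (ENNReal.cancel_of_ne hSvne).le_tsub_iff_right hSv]
    refine eVar_le d γ fun N' u hu1 hu2 => ?_
    rw [(ENNReal.cancel_of_ne hSvne).le_tsub_iff_right hSv]
    exact key N' u hu1 hu2 N v hv1 hv2
  have h1ne : eVar d γ (Set.Icc c s) ≠ ⊤ := (hsub1.trans_lt (lt_top_iff_ne_top.mpr hT)).ne
  rw [← (ENNReal.cancel_of_ne h1ne).le_tsub_iff_left hsub1]
  refine eVar_le d γ fun N v hv1 hv2 => ?_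
  rw [(ENNReal.cancel_of_ne h1ne).le_tsub_iff_left hsub1]
  exact step1 N v hv1 hv2

lemma eVar_subadd (hd0 : ∀ x, d x x = 0) (htri : ∀ x y z, d x z ≤ d x y + d y z)
    {c s t : ℝ} (hcs : c ≤ s) (hst : s ≤ t) :
    eVar d γ (Set.Icc c t) ≤ eVar d γ (Set.Icc c s) + eVar d γ (Set.Icc s t) := by
  refine eVar_le _ _ fun N w h1 h2 => ?_
  have key : ∀ p q : ℝ, p ≤ q →
      d (γ p) (γ q) ≤ d (γ (min p s)) (γ (min q s)) + d (γ (max p s)) (γ (max q s)) := by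
    intro p q hpq
    rcases le_total q s with h | h
    · rw [min_eq_left (hpq.trans h), min_eq_left h, max_eq_right (hpq.trans h), max_eq_right h,
        hd0, add_zero]
    · rcases le_total p s with h' | h'
      · rw [min_eq_left h', min_eq_right h, max_eq_right h', max_eq_left h]
        exact htri _ _ _
      · rw [min_eq_right h', min_eq_right (h'.trans hpq), hd0, zero_add, max_eq_left h',
          max_eq_left (h'.trans hpq)]
  calc ∑ j : Fin N, d (γ (w j.castSucc)) (γ (w j.succ))
      ≤ ∑ j : Fin N, (d (γ (min (w j.castSucc) s)) (γ (min (w j.succ) s)) +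
          d (γ (max (w j.castSucc) s)) (γ (max (w j.succ) s))) :=
        Finset.sum_le_sum fun j _ => key _ _ (h2 Fin.castSucc_lt_succ).le
    _ = (∑ j : Fin N, d (γ (min (w j.castSucc) s)) (γ (min (w j.succ) s))) +
          ∑ j : Fin N, d (γ (max (w j.castSucc) s)) (γ (max (w j.succ) s)) :=
        Finset.sum_add_distrib
    _ ≤ eVar d γ (Set.Icc c s) + eVar d γ (Set.Icc s t) := by
        refine add_le_add ?_ ?_
        · rw [fin_sum_extSeq d γ w (fun p => min p s)]
          refine mono_sum_le d γ hd0 _ (fun m n h => min_le_min (extSeq_monotone h2.monotone h) le_rfl) (fun n => ?_) N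
          exact ⟨le_min (extSeq_mem h1 n).1 hcs, min_le_right _ _⟩
        · rw [fin_sum_extSeq d γ w (fun p => max p s)]
          refine mono_sum_le d γ hd0 _ (fun m n h => max_le_max (extSeq_monotone h2.monotone h) le_rfl) (fun n => ?_) N
          exact ⟨le_max_right _ _, max_le ((extSeq_mem h1 n).2) hst⟩


lemma dcont (hd0 : ∀ x, d x x = 0) (hsym : ∀ x y, d x y = d y x)
    (hlsc : LowerSemicontinuous (fun p : X × X => d p.1 p.2))
    {a b : ℝ} (hγ : ContinuousOn γ (Set.Icc a b))
    (hvar : eVar d γ (Set.Icc a b) ≠ ⊤) :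
    ∀ t ∈ Set.Icc a b, Tendsto (fun s => d (γ s) (γ t)) (𝓝[Set.Icc a b] t) (𝓝 0) := by
  intro t ht
  rw [ENNReal.tendsto_nhds_zero]
  by_contra hcon
  push_neg at hcon
  obtain ⟨ε₀, hε₀, hfreq⟩ := hcon
  set ε := min ε₀ 1 with hε
  have hεpos : 0 < ε := lt_min hε₀ zero_lt_one
  have hεne : ε ≠ 0 := hεpos.ne'
  have hεtop : ε ≠ ⊤ := (lt_of_le_of_lt (min_le_right _ _) ENNReal.one_lt_top).ne
  have hfreq' : ∃ᶠ s in 𝓝[Set.Icc a b] t, ε < d (γ s) (γ t) :=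
    hfreq.mono fun s hs => lt_of_le_of_lt (min_le_left _ _) hs
  set G := (𝓝[Set.Icc a b] t) ⊓ 𝓟 {s | ε < d (γ s) (γ t)} with hG
  have hGne : G.NeBot := Filter.frequently_iff_neBot.mp hfreq'
  have hGle : G ≤ 𝓝[Set.Icc a b] t := inf_le_left
  have hmemG : {s | ε < d (γ s) (γ t)} ∈ G := mem_inf_of_right (mem_principal_self _)
  have hIccG : Set.Icc a b ∈ G := hGle self_mem_nhdsWithin
  have hstep : ∀ s : Finset ℝ, (∀ x ∈ s, x ∈ Set.Icc a b ∧ ε < d (γ x) (γ t)) →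
      ∃ y, (y ∈ Set.Icc a b ∧ ε < d (γ y) (γ t)) ∧ ∀ x ∈ s, ε < d (γ y) (γ x) := by
    intro s hs
    have hev : ∀ᶠ y in 𝓝[Set.Icc a b] t, ∀ x ∈ s, ε < d (γ y) (γ x) := by
      rw [Filter.eventually_all_finset]
      intro x hx
      have hdx : ε < d (γ t) (γ x) := by rw [hsym]; exact (hs x hx).2
      have hev2 := hlsc (γ t, γ x) ε hdx
      have hmap : Tendsto (fun y => (γ y, γ x)) (𝓝[Set.Icc a b] t) (𝓝 (γ t, γ x)) :=
        (hγ t ht).prodMk_nhds tendsto_const_nhds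
      exact hmap.eventually hev2
    have h1 : {y | ∀ x ∈ s, ε < d (γ y) (γ x)} ∈ G := hGle hev
    obtain ⟨y, hy1, hy2, hy3⟩ := G.nonempty_of_mem (Filter.inter_mem h1 (Filter.inter_mem hmemG hIccG))
    exact ⟨y, ⟨hy3, hy2⟩, fun x hx => hy1 x hx⟩
  obtain ⟨v, hvP, hvr⟩ := exists_seq_of_forall_finset_exists
      (fun x : ℝ => x ∈ Set.Icc a b ∧ ε < d (γ x) (γ t))
      (fun x y => ε < d (γ y) (γ x)) hstep
  -- distinctness
  have hdist : ∀ m n : ℕ, m < n → v m ≠ v n := by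
    intro m n h heq
    have h2 := hvr m n h
    rw [← heq, hd0] at h2
    exact absurd h2 (not_lt.mpr zero_le)
  have hbig : ∀ N : ℕ, (N : ℝ≥0∞) * ε ≤ eVar d γ (Set.Icc a b) := by
    intro N
    classical
    set F : Finset ℝ := (Finset.range (N+1)).image v with hF
    have hcard : F.card = N + 1 := by
      rw [hF, Finset.card_image_of_injOn, Finset.card_range]
      intro m _ n _ h
      by_contra hne
      rcases lt_or_gt_of_ne hne with h' | h'
      · exact hdist m n h' h
      · exact hdist n m h' h.symm
    set e := F.orderIsoOfFin hcard with he
    set u : Fin (N+1) → ℝ := fun j => (e j : ℝ) with hu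
    have humono : StrictMono u := fun i j h => Subtype.coe_lt_coe.mpr (e.lt_iff_lt.mpr h)
    have humem : ∀ j, u j ∈ Set.Icc a b := by
      intro j
      have hmem : (u j) ∈ F := (e j).2
      rw [hF, Finset.mem_image] at hmem
      obtain ⟨m, _, hm⟩ := hmem
      rw [← hm]
      exact (hvP m).1
    have hterm : ∀ j : Fin N, ε ≤ d (γ (u j.castSucc)) (γ (u j.succ)) := by
      intro j
      have hm1 : (u j.castSucc) ∈ F := (e j.castSucc).2
      have hm2 : (u j.succ) ∈ F := (e j.succ).2
      rw [hF, Finset.mem_image] at hm1 hm2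
      obtain ⟨m₁, _, hm₁⟩ := hm1
      obtain ⟨m₂, _, hm₂⟩ := hm2
      have hne : u j.castSucc ≠ u j.succ := (humono Fin.castSucc_lt_succ).ne
      have hmne : m₁ ≠ m₂ := by
        intro hcontr; apply hne; rw [← hm₁, ← hm₂, hcontr]
      rcases lt_or_gt_of_ne hmne with h' | h'
      · have := hvr m₁ m₂ h'
        rw [hm₁, hm₂] at this
        rw [hsym]
        exact this.le
      · have := hvr m₂ m₁ h'
        rw [hm₁, hm₂] at this
        exact this.le
    calc (N : ℝ≥0∞) * ε = ∑ _j : Fin N, ε := by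
          simp [Finset.sum_const, nsmul_eq_mul]
      _ ≤ ∑ j : Fin N, d (γ (u j.castSucc)) (γ (u j.succ)) :=
          Finset.sum_le_sum fun j _ => hterm j
      _ ≤ eVar d γ (Set.Icc a b) := partition_sum_le d γ u humem humono
  obtain ⟨n, hn⟩ := ENNReal.exists_nat_gt (ENNReal.div_lt_top hvar hεne).ne
  rw [ENNReal.div_lt_iff (Or.inl hεne) (Or.inl hεtop)] at hn
  exact absurd (hbig n) (not_le.mpr hn)


end aux

theorem stmt9 {X : Type*} [TopologicalSpace X]
    (d : X → X → ℝ≥0∞) (hX : IsEMT X d)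
    (a b : ℝ) (hab : a < b)
    (γ : ℝ → X) (hγ : ContinuousOn γ (Set.Icc a b))
    (hvar : eVar d γ (Set.Icc a b) ≠ ⊤) :
    ContinuousOn (fun t => eVar d γ (Set.Icc a t)) (Set.Icc a b) ∧
    ∀ t ∈ Set.Icc a b,
      Tendsto (fun s => d (γ s) (γ t)) (𝓝[Set.Icc a b] t) (𝓝 0) := by
  obtain ⟨_, hd0, hsym, htri, _, hlsc, _, _⟩ := hX
  have hdc := dcont d γ hd0 hsym hlsc hγ hvar
  refine ⟨?_, hdc⟩
  intro t ht
  have hVt : eVar d γ (Set.Icc a t) ≠ ⊤ :=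
    ((eVar_mono d γ (Set.Icc_subset_Icc le_rfl ht.2)).trans_lt hvar.lt_top).ne
  have hmono : ∀ {s₁ s₂ : ℝ}, s₁ ≤ s₂ →
      eVar d γ (Set.Icc a s₁) ≤ eVar d γ (Set.Icc a s₂) :=
    fun h => eVar_mono d γ (Set.Icc_subset_Icc le_rfl h)
  show Tendsto (fun s => eVar d γ (Set.Icc a s)) (𝓝[Set.Icc a b] t)
    (𝓝 (eVar d γ (Set.Icc a t)))
  rw [ENNReal.tendsto_nhds hVt]
  intro ε hε
  rcases eq_or_ne ε ⊤ with rfl | hεtop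
  · filter_upwards [self_mem_nhdsWithin] with s _
    constructor
    · simp
    · simp
  have hεne : ε ≠ 0 := hε.ne'
  -- LEFT claim
  have left : ∃ s₁ < t, ∀ s ∈ Set.Icc a b, s₁ < s →
      eVar d γ (Set.Icc a t) - ε ≤ eVar d γ (Set.Icc a s) := by
    by_cases hVe : eVar d γ (Set.Icc a t) ≤ ε
    · exact ⟨t - 1, by linarith, fun s _ _ => by
        rw [tsub_eq_zero_of_le hVe]; exact zero_le⟩
    push_neg at hVe
    have hhalf : eVar d γ (Set.Icc a t) - ε/2 < eVar d γ (Set.Icc a t) :=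
      ENNReal.sub_lt_self hVt (fun h0 => by simp [h0] at hVe)
        (by simp [ENNReal.div_eq_zero_iff, hεne])
    obtain ⟨N, w, hw1, hw2, hw3⟩ := exists_partition_of_lt d γ hhalf
    rcases lt_or_eq_of_le (hw1 (Fin.last N)).2 with hlast | hlast
    · -- w last < t: use partition as is
      refine ⟨w (Fin.last N), hlast, fun s _ hws => ?_⟩
      have hle : ∑ j : Fin N, d (γ (w j.castSucc)) (γ (w j.succ)) ≤ eVar d γ (Set.Icc a s) :=
        partition_sum_le d γ w
          (fun j => ⟨(hw1 j).1, (hw2.monotone (Fin.le_last j)).trans hws.le⟩) hw2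
      calc eVar d γ (Set.Icc a t) - ε ≤ eVar d γ (Set.Icc a t) - ε/2 :=
            tsub_le_tsub le_rfl ENNReal.half_le_self
        _ ≤ _ := hw3.le.trans hle
    · -- w last = t
      rcases N with _ | N'
      · exfalso
        have hpos : (0:ℝ≥0∞) < eVar d γ (Set.Icc a t) - ε/2 :=
          tsub_pos_iff_lt.mpr (lt_of_le_of_lt ENNReal.half_le_self hVe)
        simp only [Finset.univ_eq_empty, Finset.sum_empty] at hw3
        exact absurd hw3 (not_lt.mpr zero_le)
      set q := w (Fin.last N').castSucc with hqdef
      have hqt : q < t := by rw [← hlast]; exact hw2 (Fin.castSucc_lt_last _)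
      have hqa : a ≤ q := (hw1 _).1
      rw [Fin.sum_univ_castSucc] at hw3
      rw [Fin.succ_last, hlast] at hw3
      set S' := ∑ j : Fin N', d (γ (w j.castSucc.castSucc)) (γ (w j.castSucc.succ)) with hS'
      set D := d (γ q) (γ t) with hD
      have hheadmem : ∀ j : Fin (N'+1), w j.castSucc ∈ Set.Icc a q :=
        fun j => ⟨(hw1 _).1, hw2.monotone (Fin.castSucc_le_castSucc_iff.mpr (Fin.le_last j))⟩
      have hheadmono : StrictMono (fun j : Fin (N'+1) => w j.castSucc) :=
        fun i j h => hw2 (Fin.castSucc_lt_castSucc_iff.mpr h)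
      have hheadsum : ∀ s : ℝ, q ≤ s →
          S' ≤ eVar d γ (Set.Icc a s) := by
        intro s hqs
        have := partition_sum_le d γ (J := Set.Icc a s) (fun j : Fin (N'+1) => w j.castSucc)
          (fun j => ⟨(hheadmem j).1, (hheadmem j).2.trans hqs⟩) hheadmono
        refine le_trans (le_of_eq ?_) this
        refine Finset.sum_congr rfl fun j _ => ?_
        rw [Fin.succ_castSucc]
      rcases eq_or_ne D 0 with hD0 | hDne
      · refine ⟨q, hqt, fun s _ hqs => ?_⟩
        calc eVar d γ (Set.Icc a t) - ε ≤ eVar d γ (Set.Icc a t) - ε/2 :=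
              tsub_le_tsub le_rfl ENNReal.half_le_self
          _ ≤ S' + D := hw3.le
          _ = S' := by rw [hD0, add_zero]
          _ ≤ eVar d γ (Set.Icc a s) := hheadsum s hqs.le
      · -- D ≠ 0
        have hsumle := partition_sum_le d γ w hw1 hw2
        rw [Fin.sum_univ_castSucc, Fin.succ_last, hlast] at hsumle
        have hDtop : D ≠ ⊤ := ((le_add_self.trans hsumle).trans_lt hVt.lt_top).ne
        have hc : D - ε/2 < D :=
          ENNReal.sub_lt_self hDtop hDne (by simp [ENNReal.div_eq_zero_iff, hεne])
        have hev := hlsc (γ q, γ t) _ hc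
        have hmap : Tendsto (fun y => (γ q, γ y)) (𝓝[Set.Icc a b] t) (𝓝 (γ q, γ t)) :=
          tendsto_const_nhds.prodMk_nhds (hγ t ht)
        have hev2 : ∀ᶠ y in 𝓝[Set.Icc a b] t, D - ε/2 < d (γ q) (γ y) := hmap.eventually hev
        have hsubIco : Set.Ico q t ⊆ Set.Icc a b :=
          fun x hx => ⟨hqa.trans hx.1, hx.2.le.trans ht.2⟩
        have hne2 : (𝓝[Set.Ico q t] t).NeBot := by
          rw [← mem_closure_iff_nhdsWithin_neBot, closure_Ico hqt.ne]
          exact ⟨hqt.le, le_rfl⟩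
        have hev3 : ∀ᶠ y in 𝓝[Set.Ico q t] t, D - ε/2 < d (γ q) (γ y) :=
          hev2.filter_mono (nhdsWithin_mono t hsubIco)
        have hev4 : ∀ᶠ y in 𝓝[Set.Ico q t] t, y ∈ Set.Ico q t := eventually_mem_nhdsWithin
        have hev5 : ∀ᶠ y in 𝓝[Set.Ico q t] t, q < y :=
          (eventually_gt_nhds hqt).filter_mono nhdsWithin_le_nhds
        obtain ⟨s', hs'd, hs'Ico, hs'q⟩ := (hev3.and (hev4.and hev5)).exists
        have hSeq : S' = ∑ j : Fin N', d (γ (w j.castSucc.castSucc)) (γ (w j.succ.castSucc)) :=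
          Finset.sum_congr rfl fun j _ => by rw [← Fin.succ_castSucc]
        refine ⟨s', hs'Ico.2, fun s hs hss => ?_⟩
        have hw'mono : StrictMono (Fin.snoc (fun j : Fin (N'+1) => w j.castSucc) s' : Fin (N'+2) → ℝ) :=
          snoc_strictMono hheadmono (show q < s' from hs'q)
        have hw'mem : ∀ j, (Fin.snoc (fun j : Fin (N'+1) => w j.castSucc) s' : Fin (N'+2) → ℝ) j ∈ Set.Icc a s := by
          intro j
          rcases Fin.eq_castSucc_or_eq_last j with ⟨j', rfl⟩ | rfl
          · rw [Fin.snoc_castSucc]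
            exact ⟨(hheadmem j').1, (hheadmem j').2.trans (hs'q.le.trans hss.le)⟩
          · rw [Fin.snoc_last]
            exact ⟨hqa.trans hs'q.le, hss.le⟩
        have hsums := partition_sum_le d γ _ hw'mem hw'mono
        rw [snoc_sum] at hsums
        calc eVar d γ (Set.Icc a t) - ε
            = (eVar d γ (Set.Icc a t) - ε/2) - ε/2 := by
              rw [tsub_tsub, ENNReal.add_halves]
          _ ≤ (S' + D) - ε/2 := tsub_le_tsub_right hw3.le _
          _ ≤ S' + (D - ε/2) := add_tsub_le_assoc
          _ ≤ S' + d (γ q) (γ s') := add_le_add_right hs'd.le _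
          _ ≤ eVar d γ (Set.Icc a s) := by rw [hSeq]; exact hsums
  -- RIGHT claim
  have right : ∃ s₂, t < s₂ ∧ ∀ s ∈ Set.Icc a b, s < s₂ →
      eVar d γ (Set.Icc a s) ≤ eVar d γ (Set.Icc a t) + ε := by
    rcases eq_or_lt_of_le ht.2 with htb | htb
    · refine ⟨t + 1, by linarith, fun s hs _ => ?_⟩
      exact le_trans (hmono (htb ▸ hs.2)) le_self_add
    · -- t < b
      have hclaim : ∃ s₂, t < s₂ ∧ s₂ ≤ b ∧ eVar d γ (Set.Icc t s₂) ≤ ε := by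
        by_contra hcon
        push_neg at hcon
        set η := ε/2/2 with hη
        have hη0 : η ≠ 0 := by simp [hη, ENNReal.div_eq_zero_iff, hεne]
        have hηε : η ≤ ε := le_trans ENNReal.half_le_self ENNReal.half_le_self
        have hev := ENNReal.tendsto_nhds_zero.mp (hdc t ht) η (pos_iff_ne_zero.mpr hη0)
        obtain ⟨U, hUopen, htU, hUsub⟩ := mem_nhdsWithin.mp hev
        obtain ⟨δ, hδ0, hball⟩ := Metric.isOpen_iff.mp hUopen t htU
        set s₀ := min b (t + δ/2) with hs₀def
        have hts₀ : t < s₀ := lt_min htb (by linarith)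
        have hs₀b : s₀ ≤ b := min_le_left _ _
        have hsmall : ∀ u ∈ Set.Icc t s₀, d (γ u) (γ t) ≤ η := by
          intro u hu
          refine hUsub ⟨hball ?_, ⟨ht.1.trans hu.1, hu.2.trans hs₀b⟩⟩
          rw [Metric.mem_ball, Real.dist_eq]
          have h1 : u ≤ t + δ/2 := hu.2.trans (min_le_right _ _)
          have h2 := hu.1
          rw [abs_of_nonneg (by linarith)]
          linarith
        set R := eVar d γ (Set.Icc t s₀) with hRdef
        have hRtop : R ≠ ⊤ :=
          ((eVar_mono d γ (Set.Icc_subset_Icc ht.1 hs₀b)).trans_lt hvar.lt_top).ne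
        have hRε : ε < R := hcon s₀ hts₀ hs₀b
        have hpart : R - η < R := ENNReal.sub_lt_self hRtop (hε.trans hRε).ne' hη0
        obtain ⟨N, w, hw1, hw2, hw3⟩ := exists_partition_of_lt d γ hpart
        have hz : ∃ (M : ℕ) (z : Fin (M+1) → ℝ), z 0 = t ∧ (∀ j, z j ∈ Set.Icc t s₀) ∧
            StrictMono z ∧ R - η < ∑ j : Fin M, d (γ (z j.castSucc)) (γ (z j.succ)) := by
          rcases eq_or_lt_of_le (hw1 0).1 with h0 | h0
          · exact ⟨N, w, h0.symm, hw1, hw2, hw3⟩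
          · refine ⟨N+1, Fin.cons t w, Fin.cons_zero _ _, ?_, cons_strictMono hw2 h0, ?_⟩
            · intro j
              rcases Fin.eq_zero_or_eq_succ j with rfl | ⟨j', rfl⟩
              · rw [Fin.cons_zero]; exact ⟨le_rfl, hts₀.le⟩
              · rw [Fin.cons_succ]; exact hw1 j'
            · rw [cons_sum]
              exact lt_of_lt_of_le hw3 le_add_self
        obtain ⟨M, z, hz0, hzmem, hzmono, hzsum⟩ := hz
        rcases M with _ | M'
        · have hpos : (0:ℝ≥0∞) < R - η := tsub_pos_iff_lt.mpr (hηε.trans_lt hRε)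
          simp only [Finset.univ_eq_empty, Finset.sum_empty] at hzsum
          exact absurd hzsum (not_lt.mpr zero_le)
        · set u₁ := z 1 with hu₁def
          have h01 : (0 : Fin (M'+2)) < 1 := by
            rw [Fin.lt_def]
            simp
          have htu₁ : t < u₁ := by rw [← hz0]; exact hzmono h01
          have hu₁s₀ : u₁ ≤ s₀ := (hzmem 1).2
          rw [Fin.sum_univ_succ] at hzsum
          have hfirst : z (0 : Fin (M'+1)).castSucc = t := by
            rw [Fin.castSucc_zero, hz0]
          have hsnd : z (0 : Fin (M'+1)).succ = u₁ := by
            rw [Fin.succ_zero_eq_one]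
          rw [hfirst, hsnd] at hzsum
          set T := ∑ j : Fin M', d (γ (z (j.succ).castSucc)) (γ (z j.succ.succ)) with hT
          have htail : T ≤ eVar d γ (Set.Icc u₁ s₀) := by
            have hm : StrictMono (fun i : Fin (M'+1) => z i.succ) :=
              fun i j h => hzmono (Fin.succ_lt_succ_iff.mpr h)
            have hmem : ∀ i : Fin (M'+1), z i.succ ∈ Set.Icc u₁ s₀ := by
              intro i
              refine ⟨hzmono.monotone ?_, (hzmem _).2⟩
              rw [Fin.le_def]
              simp
            have := partition_sum_le d γ (fun i : Fin (M'+1) => z i.succ) hmem hm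
            refine le_trans (le_of_eq ?_) this
            refine Finset.sum_congr rfl fun j _ => ?_
            rw [← Fin.succ_castSucc]
          have hsmall₁ : d (γ t) (γ u₁) ≤ η := by
            rw [hsym]; exact hsmall u₁ ⟨htu₁.le, hu₁s₀⟩
          have hH : ε < eVar d γ (Set.Icc t u₁) := hcon u₁ htu₁ (hu₁s₀.trans hs₀b)
          have hsuper := eVar_superadd d γ hd0 htu₁.le hu₁s₀
          have h2 : R - (η + η) ≤ eVar d γ (Set.Icc u₁ s₀) := by
            refine le_trans ?_ htail
            rw [tsub_le_iff_left]
            have h3 : R - η ≤ η + T := le_trans hzsum.le (add_le_add_left hsmall₁ _)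
            calc R = (R - η) + η := (tsub_add_cancel_of_le (hηε.trans hRε.le)).symm
              _ ≤ (η + T) + η := add_le_add_left h3 _
              _ = (η + η) + T := by ring
          have hηη : η + η = ε/2 := ENNReal.add_halves _
          rw [hηη] at h2
          have hfinal : ε + (R - ε/2) ≤ R :=
            le_trans (add_le_add hH.le h2) hsuper
          have hhalfR : ε/2 ≤ R := le_trans ENNReal.half_le_self hRε.le
          have hcontr : ε + R ≤ R + ε/2 := by
            calc ε + R = ε + ((R - ε/2) + ε/2) := by rw [tsub_add_cancel_of_le hhalfR]
              _ = (ε + (R - ε/2)) + ε/2 := by ring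
              _ ≤ R + ε/2 := add_le_add_left hfinal _
          have : R + ε ≤ R + ε/2 := by rwa [add_comm ε R] at hcontr
          have : ε ≤ ε/2 := (ENNReal.add_le_add_iff_left hRtop).mp this
          exact absurd this (not_le.mpr (ENNReal.half_lt_self hεne hεtop))
      obtain ⟨s₂, h1, h2, h3⟩ := hclaim
      refine ⟨s₂, h1, fun s hs hss => ?_⟩
      rcases le_total s t with h | h
      · exact le_trans (hmono h) le_self_add
      · calc eVar d γ (Set.Icc a s) ≤ eVar d γ (Set.Icc a t) + eVar d γ (Set.Icc t s) :=
              eVar_subadd d γ hd0 htri ht.1 h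
          _ ≤ eVar d γ (Set.Icc a t) + eVar d γ (Set.Icc t s₂) :=
              add_le_add_right (eVar_mono d γ (Set.Icc_subset_Icc le_rfl hss.le)) _
          _ ≤ eVar d γ (Set.Icc a t) + ε := add_le_add_right h3 _
  obtain ⟨s₁, hs₁t, hs₁⟩ := left
  obtain ⟨s₂, hts₂, hs₂⟩ := right
  have hoo : Set.Ioo s₁ s₂ ∈ 𝓝 t := Ioo_mem_nhds hs₁t hts₂
  filter_upwards [self_mem_nhdsWithin, mem_nhdsWithin_of_mem_nhds hoo] with s hsmem hsoo
  exact ⟨hs₁ s hsmem hsoo.1, hs₂ s hsmem hsoo.2⟩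
end
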